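/- Let H₀ and K be complex Hilbert spaces and set H = H₀ ⊕₂ K. Let R ∈ B(H) be such that R(x, 0) ∈ H₀ × {0} for every x ∈ H₀ (upper triangular with respect to the decomposition), and let V ∈ B(K) be the compression V k = P_K(R(0, k)), where P_K is the orthogonal projection of H onto the second summand. Let S ∈ B(H) satisfy S ∘ R = R ∘ S, S(x, 0) = 0 for all x ∈ H₀, and assume the map k ↦ P_K(S(0, k)) is an isometry of K. Define X : K → H by X k = S(0, k), and let M be the closure of the range of X. Then: (i) ‖X k‖ ≥ ‖k‖ for all k ∈ K; (ii) R(X k) = X(V k) for all k ∈ K; (iii) M is a closed subspace of H invariant under R; and (iv) X induces a continuous linear equivalence X̃ : K → M with R(X̃ k) = X̃(V k) for all k ∈ K, so that the restriction R|_M is similar to V. -/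

import Mathlib

noncomputable section

/-- The key step in the proof of Theorem 2.3: if `R` is upper triangular with respect to
`H = H₀ ⊕₂ K`, `V` is the compression of `R` to `K`, and `S` commutes with `R`, vanishes on
`H₀` and its compression to `K` is an isometry, then `X : k ↦ S(0,k)` is bounded below,
intertwines `V` with `R`, its closed range `M` is `R`-invariant, and `X` induces a continuous
linear equivalence of `K` onto `M` realizing the similarity of `R|_M` to `V`. -/
theorem restriction_similar_to_compression
    {H₀ K : Type}
    [NormedAddCommGroup H₀] [InnerProductSpace ℂ H₀] [CompleteSpace H₀]
    [NormedAddCommGroup K] [InnerProductSpace ℂ K] [CompleteSpace K]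
    (R : WithLp 2 (H₀ × K) →L[ℂ] WithLp 2 (H₀ × K))
    (hRtri : ∀ x : H₀,
      (WithLp.equiv 2 (H₀ × K) (R ((WithLp.equiv 2 (H₀ × K)).symm (x, 0)))).2 = 0)
    (V : K →L[ℂ] K)
    (hV : ∀ k : K,
      V k = (WithLp.equiv 2 (H₀ × K) (R ((WithLp.equiv 2 (H₀ × K)).symm (0, k)))).2)
    (S : WithLp 2 (H₀ × K) →L[ℂ] WithLp 2 (H₀ × K))
    (hSR : S.comp R = R.comp S)
    (hS0 : ∀ x : H₀, S ((WithLp.equiv 2 (H₀ × K)).symm (x, 0)) = 0)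
    (hSiso : ∀ k : K,
      ‖(WithLp.equiv 2 (H₀ × K) (S ((WithLp.equiv 2 (H₀ × K)).symm (0, k)))).2‖ = ‖k‖)
    (X : K →L[ℂ] WithLp 2 (H₀ × K))
    (hX : ∀ k : K, X k = S ((WithLp.equiv 2 (H₀ × K)).symm (0, k)))
    (M : Submodule ℂ (WithLp 2 (H₀ × K)))
    (hM : M = (LinearMap.range (X : K →ₗ[ℂ] WithLp 2 (H₀ × K))).topologicalClosure) :
    (∀ k : K, ‖k‖ ≤ ‖X k‖) ∧
    (∀ k : K, R (X k) = X (V k)) ∧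
    (IsClosed (M : Set (WithLp 2 (H₀ × K))) ∧ ∀ u ∈ M, R u ∈ M) ∧
    (∃ Xt : K ≃L[ℂ] M,
      (∀ k : K, (Xt k : WithLp 2 (H₀ × K)) = X k) ∧
      ∀ k : K, R (Xt k : WithLp 2 (H₀ × K)) = (Xt (V k) : WithLp 2 (H₀ × K))) := by
  set e := WithLp.equiv 2 (H₀ × K) with he
  -- generic decomposition lemma
  have hdec : ∀ u : WithLp 2 (H₀ × K),
      u = e.symm ((e u).1, 0) + e.symm (0, (e u).2) := by
    intro u
    apply e.injective
    simp [he, Prod.ext_iff]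
  -- (i) lower bound
  have hlow : ∀ k : K, ‖k‖ ≤ ‖X k‖ := by
    intro k
    have h1 : ‖(X k).snd‖ = ‖k‖ := by
      rw [hX k]; exact hSiso k
    have h2 := WithLp.prod_norm_sq_eq_of_L2 (X k)
    nlinarith [norm_nonneg (X k).fst, norm_nonneg (X k), sq_nonneg ‖(X k).fst‖]
  -- (ii) intertwining
  have hint : ∀ k : K, R (X k) = X (V k) := by
    intro k
    have hcomm : R (S (e.symm (0, k))) = S (R (e.symm (0, k))) := by
      have := DFunLike.congr_fun hSR (e.symm (0, k))
      simpa using this.symm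
    have hsnd : (e (R (e.symm (0, k)))).2 = V k := (hV k).symm
    calc R (X k) = S (R (e.symm (0, k))) := by rw [hX k, hcomm]
      _ = S (e.symm ((e (R (e.symm (0, k)))).1, 0))
          + S (e.symm (0, (e (R (e.symm (0, k)))).2)) := by
            rw [← map_add, ← hdec (R (e.symm (0, k)))]
      _ = X (V k) := by
            rw [hS0, hsnd, zero_add, hX]
  -- range of X as a linear map, and its closedness
  set Xl : K →ₗ[ℂ] WithLp 2 (H₀ × K) := (X : K →ₗ[ℂ] WithLp 2 (H₀ × K)) with hXl
  have hanti : AntilipschitzWith 1 X :=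
    X.antilipschitz_of_bound (fun k => by simpa using hlow k)
  have hrclosed : IsClosed (Set.range X) :=
    (hanti.isClosedEmbedding X.uniformContinuous).isClosed_range
  have hrange_eq : (LinearMap.range Xl : Set (WithLp 2 (H₀ × K))) = Set.range X := by
    ext u; simp [hXl]
  have hMclosed : IsClosed (M : Set (WithLp 2 (H₀ × K))) := by
    rw [hM]; exact Submodule.isClosed_topologicalClosure _
  have hMrange : M = LinearMap.range Xl := by
    rw [hM]
    refine le_antisymm (Submodule.topologicalClosure_minimal _ le_rfl ?_)
      (Submodule.le_topologicalClosure _)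
    rw [hrange_eq]; exact hrclosed
  -- (iii) invariance
  have hinv : ∀ u ∈ M, R u ∈ M := by
    intro u hu
    rw [hMrange] at hu ⊢
    obtain ⟨k, rfl⟩ := hu
    exact ⟨V k, (hint k).symm⟩
  refine ⟨hlow, hint, ⟨hMclosed, hinv⟩, ?_⟩
  -- (iv) the continuous linear equivalence
  haveI : CompleteSpace M := hMclosed.completeSpace_coe
  have hmem : ∀ k : K, X k ∈ M := fun k => hMrange ▸ ⟨k, rfl⟩
  set f : K →L[ℂ] M := X.codRestrict M hmem with hf
  have hker : LinearMap.ker (f : K →ₗ[ℂ] M) = ⊥ := by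
    rw [LinearMap.ker_eq_bot]
    intro a b hab
    have : X a = X b := by
      have := congrArg (Subtype.val) hab
      simpa [hf] using this
    have h0 : ‖a - b‖ ≤ ‖X (a - b)‖ := hlow _
    rw [map_sub, this, sub_self, norm_zero] at h0
    have : ‖a - b‖ = 0 := le_antisymm h0 (norm_nonneg _)
    exact sub_eq_zero.mp (norm_eq_zero.mp this)
  have hsurj : LinearMap.range (f : K →ₗ[ℂ] M) = ⊤ := by
    rw [LinearMap.range_eq_top]
    rintro ⟨u, hu⟩
    rw [hMrange] at hu
    obtain ⟨k, hk⟩ := hu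
    exact ⟨k, Subtype.ext (by simpa [hf, hXl] using hk)⟩
  refine ⟨ContinuousLinearEquiv.ofBijective f hker hsurj, fun k => ?_, fun k => ?_⟩
  · simp [f]
  · have h1 : ((ContinuousLinearEquiv.ofBijective f hker hsurj) k : WithLp 2 (H₀ × K)) = X k := by
      simp [f]
    have h2 : ((ContinuousLinearEquiv.ofBijective f hker hsurj) (V k) : WithLp 2 (H₀ × K))
        = X (V k) := by simp [f]
    rw [h1, h2]; exact hint k
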